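/- Let G be a finite simple graph with complex edge weights w such that w(e) ≠ 0 for every edge e, and let 𝒫 be a finite set of plaquettes such that the flip graph on the set 𝓜 of perfect matchings is connected (where M and M′ are joined iff M′ = φ_p(M) for some p ∈ 𝒫 with p₁,p₃ ∈ M or p₂,p₄ ∈ M). Then the ground state of the generalized RK Hamiltonian H = ∑_{p∈𝒫} P_p is unique: every f : 𝓜 → ℂ with H f = 0 is a complex scalar multiple of the weighted RK wavefunction ψ_w(M) = ∏_{e∈M} w(e). -/
import Mathlib


open scoped BigOperators

namespace RK

variable {V : Type*} [Fintype V] [DecidableEq V]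

/-- A plaquette of a simple graph `G`: four distinct vertices `v₁, v₂, v₃, v₄`
forming a 4-cycle in `G`. -/
structure Plaquette (G : SimpleGraph V) where
  v1 : V
  v2 : V
  v3 : V
  v4 : V
  h12 : v1 ≠ v2
  h13 : v1 ≠ v3
  h14 : v1 ≠ v4
  h23 : v2 ≠ v3
  h24 : v2 ≠ v4
  h34 : v3 ≠ v4
  adj12 : G.Adj v1 v2
  adj23 : G.Adj v2 v3
  adj34 : G.Adj v3 v4
  adj41 : G.Adj v4 v1

variable {G : SimpleGraph V}

/-- The edge `p₁ = {v₁, v₂}` of a plaquette. -/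
def Plaquette.e1 (p : Plaquette G) : Sym2 V := s(p.v1, p.v2)

/-- The edge `p₂ = {v₂, v₃}` of a plaquette. -/
def Plaquette.e2 (p : Plaquette G) : Sym2 V := s(p.v2, p.v3)

/-- The edge `p₃ = {v₃, v₄}` of a plaquette. -/
def Plaquette.e3 (p : Plaquette G) : Sym2 V := s(p.v3, p.v4)

/-- The edge `p₄ = {v₄, v₁}` of a plaquette. -/
def Plaquette.e4 (p : Plaquette G) : Sym2 V := s(p.v4, p.v1)

/-- The four edges of a plaquette, as a finset. -/
def Plaquette.edges (p : Plaquette G) : Finset (Sym2 V) := {p.e1, p.e2, p.e3, p.e4}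

/-- `M` is a perfect matching of `G`: a finset of edges of `G` such that every vertex
belongs to exactly one edge of `M`. -/
def IsPM (G : SimpleGraph V) (M : Finset (Sym2 V)) : Prop :=
  (∀ e ∈ M, e ∈ G.edgeSet) ∧ ∀ v : V, ∃! e, e ∈ M ∧ v ∈ e

/-- The type of perfect matchings of `G`. -/
def PM (G : SimpleGraph V) := {M : Finset (Sym2 V) // IsPM G M}

/-- `a_p = w p₂ · w p₄`. -/
def aw (w : Sym2 V → ℂ) (p : Plaquette G) : ℂ := w p.e2 * w p.e4

/-- `b_p = w p₁ · w p₃`. -/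
def bw (w : Sym2 V → ℂ) (p : Plaquette G) : ℂ := w p.e1 * w p.e3

/-- The plaquette operator `P_p`, expressed using a flip map `Φ` on perfect matchings
(`Φ p M` is required to be the symmetric difference `M Δ {p₁, p₂, p₃, p₄}` whenever the
flip is admissible, i.e. whenever `p₁, p₃ ∈ M` or `p₂, p₄ ∈ M`):
`(P_p f)(M) = |a_p|² f(M) − conj(a_p)·b_p·f(φ_p M)` if `p₁, p₃ ∈ M`;
`(P_p f)(M) = |b_p|² f(M) − conj(b_p)·a_p·f(φ_p M)` if `p₂, p₄ ∈ M`; and `0` otherwise. -/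
noncomputable def Pp (w : Sym2 V → ℂ) (Φ : Plaquette G → PM G → PM G) (p : Plaquette G)
    (f : PM G → ℂ) (M : PM G) : ℂ :=
  if p.e1 ∈ M.1 ∧ p.e3 ∈ M.1 then
    (‖aw w p‖ : ℂ) ^ 2 * f M - (starRingEnd ℂ) (aw w p) * bw w p * f (Φ p M)
  else if p.e2 ∈ M.1 ∧ p.e4 ∈ M.1 then
    (‖bw w p‖ : ℂ) ^ 2 * f M - (starRingEnd ℂ) (bw w p) * aw w p * f (Φ p M)
  else 0

/-- The generalized Rokhsar–Kivelson Hamiltonian `H = ∑_{p ∈ Plaqs} P_p`. -/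
noncomputable def Ham (w : Sym2 V → ℂ) (Φ : Plaquette G → PM G → PM G) (Plaqs : Finset (Plaquette G))
    (f : PM G → ℂ) (M : PM G) : ℂ :=
  ∑ p ∈ Plaqs, Pp w Φ p f M

/-- The weighted RK wavefunction `ψ_w(M) = ∏_{e ∈ M} w e`. -/
def psi (w : Sym2 V → ℂ) (M : PM G) : ℂ := ∏ e ∈ M.1, w e

/-! ### Auxiliary lemmas -/

set_option linter.unusedSectionVars false

section Aux

variable {p : Plaquette G}

lemma Plaquette.e1_ne_e3 (p : Plaquette G) : p.e1 ≠ p.e3 := by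
  intro h
  rw [Plaquette.e1, Plaquette.e3, Sym2.eq_iff] at h
  rcases h with ⟨h, _⟩ | ⟨h, h'⟩
  · exact p.h13 h
  · exact p.h14 h

lemma Plaquette.e2_ne_e4 (p : Plaquette G) : p.e2 ≠ p.e4 := by
  intro h
  rw [Plaquette.e2, Plaquette.e4, Sym2.eq_iff] at h
  rcases h with ⟨h, _⟩ | ⟨h, h'⟩
  · exact p.h24 h
  · exact p.h12 h.symm

/-- The rotated plaquette `(v₂, v₃, v₄, v₁)`. -/
def Plaquette.rot (p : Plaquette G) : Plaquette G where
  v1 := p.v2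
  v2 := p.v3
  v3 := p.v4
  v4 := p.v1
  h12 := p.h23
  h13 := p.h24
  h14 := p.h12.symm
  h23 := p.h34
  h24 := p.h13.symm
  h34 := p.h14.symm
  adj12 := p.adj23
  adj23 := p.adj34
  adj34 := p.adj41
  adj41 := p.adj12

lemma Plaquette.rot_e1 (p : Plaquette G) : p.rot.e1 = p.e2 := rfl
lemma Plaquette.rot_e2 (p : Plaquette G) : p.rot.e2 = p.e3 := rfl
lemma Plaquette.rot_e3 (p : Plaquette G) : p.rot.e3 = p.e4 := rfl
lemma Plaquette.rot_e4 (p : Plaquette G) : p.rot.e4 = p.e1 := rfl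

lemma Plaquette.rot_edges (p : Plaquette G) : p.rot.edges = p.edges := by
  ext x
  simp only [Plaquette.edges, Finset.mem_insert, Finset.mem_singleton,
    Plaquette.rot_e1, Plaquette.rot_e2, Plaquette.rot_e3, Plaquette.rot_e4]
  tauto

lemma aw_rot (w : Sym2 V → ℂ) (p : Plaquette G) : aw w p.rot = bw w p := by
  rw [aw, bw, Plaquette.rot_e2, Plaquette.rot_e4, mul_comm]

lemma bw_rot (w : Sym2 V → ℂ) (p : Plaquette G) : bw w p.rot = aw w p := rfl

lemma aw_ne_zero {w : Sym2 V → ℂ} (hw : ∀ e ∈ G.edgeSet, w e ≠ 0) (p : Plaquette G) :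
    aw w p ≠ 0 :=
  mul_ne_zero (hw _ p.adj23) (hw _ p.adj41)

lemma bw_ne_zero {w : Sym2 V → ℂ} (hw : ∀ e ∈ G.edgeSet, w e ≠ 0) (p : Plaquette G) :
    bw w p ≠ 0 :=
  mul_ne_zero (hw _ p.adj12) (hw _ p.adj34)

lemma psi_ne_zero {w : Sym2 V → ℂ} (hw : ∀ e ∈ G.edgeSet, w e ≠ 0) (M : PM G) :
    psi w M ≠ 0 := by
  rw [psi, Finset.prod_ne_zero_iff]
  exact fun e he => hw e (M.2.1 e he)

/-- If `p₁, p₃ ∈ M` for a perfect matching `M`, then `p₂ ∉ M` and `p₄ ∉ M`. -/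
lemma notMem_of_mem13 {M : Finset (Sym2 V)} (hM : IsPM G M)
    (h1 : p.e1 ∈ M) (h3 : p.e3 ∈ M) : p.e2 ∉ M ∧ p.e4 ∉ M := by
  constructor
  · intro h2
    obtain ⟨e, -, hu⟩ := hM.2 p.v2
    have he1 : p.e1 = e := hu p.e1 ⟨h1, by simp [Plaquette.e1]⟩
    have he2 : p.e2 = e := hu p.e2 ⟨h2, by simp [Plaquette.e2]⟩
    have : p.e1 = p.e2 := he1.trans he2.symm
    rw [Plaquette.e1, Plaquette.e2, Sym2.eq_iff] at this
    rcases this with ⟨h, _⟩ | ⟨h, _⟩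
    · exact p.h12 h
    · exact p.h13 h
  · intro h4
    obtain ⟨e, -, hu⟩ := hM.2 p.v4
    have he3 : p.e3 = e := hu p.e3 ⟨h3, by simp [Plaquette.e3]⟩
    have he4 : p.e4 = e := hu p.e4 ⟨h4, by simp [Plaquette.e4]⟩
    have : p.e3 = p.e4 := he3.trans he4.symm
    rw [Plaquette.e3, Plaquette.e4, Sym2.eq_iff] at this
    rcases this with ⟨h, _⟩ | ⟨h, _⟩
    · exact p.h34 h
    · exact p.h13 h.symm

lemma notMem_of_mem24 {M : Finset (Sym2 V)} (hM : IsPM G M)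
    (h2 : p.e2 ∈ M) (h4 : p.e4 ∈ M) : p.e1 ∉ M ∧ p.e3 ∉ M := by
  have := notMem_of_mem13 (p := p.rot) hM h2 h4
  exact ⟨this.2, this.1⟩

/-- Memberships in the flipped matching, starting from `p₁, p₃ ∈ M`. -/
lemma mem_symmDiff13 {M : Finset (Sym2 V)} (hM : IsPM G M)
    (h1 : p.e1 ∈ M) (h3 : p.e3 ∈ M) :
    p.e2 ∈ symmDiff M p.edges ∧ p.e4 ∈ symmDiff M p.edges ∧
      p.e1 ∉ symmDiff M p.edges ∧ p.e3 ∉ symmDiff M p.edges := by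
  obtain ⟨h2, h4⟩ := notMem_of_mem13 hM h1 h3
  refine ⟨?_, ?_, ?_, ?_⟩ <;>
    simp [Finset.mem_symmDiff, Plaquette.edges, h1, h2, h3, h4]

lemma mem_symmDiff24 {M : Finset (Sym2 V)} (hM : IsPM G M)
    (h2 : p.e2 ∈ M) (h4 : p.e4 ∈ M) :
    p.e1 ∈ symmDiff M p.edges ∧ p.e3 ∈ symmDiff M p.edges ∧
      p.e2 ∉ symmDiff M p.edges ∧ p.e4 ∉ symmDiff M p.edges := by
  have := mem_symmDiff13 (p := p.rot) hM h2 h4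
  rw [Plaquette.rot_edges] at this
  exact ⟨this.2.1, this.1, this.2.2.1, this.2.2.2⟩

/-- The key relation `a_p ψ(M) = b_p ψ(φ_p M)` when `p₁, p₃ ∈ M`. -/
lemma psi_flip13 (w : Sym2 V → ℂ) {M M' : PM G}
    (h1 : p.e1 ∈ M.1) (h3 : p.e3 ∈ M.1) (hM' : M'.1 = symmDiff M.1 p.edges) :
    aw w p * psi w M = bw w p * psi w M' := by
  obtain ⟨h2, h4⟩ := notMem_of_mem13 M.2 h1 h3
  obtain ⟨h2', h4', h1', h3'⟩ := mem_symmDiff13 (p := p) M.2 h1 h3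
  rw [← hM'] at h1' h2' h3' h4'
  have hunion : M.1 ∪ ({p.e2, p.e4} : Finset (Sym2 V)) =
      M'.1 ∪ ({p.e1, p.e3} : Finset (Sym2 V)) := by
    rw [hM']
    ext x
    by_cases hx1 : x = p.e1 <;> by_cases hx2 : x = p.e2 <;>
      by_cases hx3 : x = p.e3 <;> by_cases hx4 : x = p.e4 <;>
      simp_all [Finset.mem_symmDiff, Plaquette.edges]
  have hd1 : Disjoint M.1 ({p.e2, p.e4} : Finset (Sym2 V)) := by
    simp [Finset.disjoint_right, h2, h4]
  have hd2 : Disjoint M'.1 ({p.e1, p.e3} : Finset (Sym2 V)) := by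
    simp [Finset.disjoint_right, h1', h3']
  have e1 := Finset.prod_union (f := w) hd1
  have e2 := Finset.prod_union (f := w) hd2
  rw [hunion] at e1
  rw [e2] at e1
  rw [Finset.prod_pair p.e2_ne_e4, Finset.prod_pair p.e1_ne_e3] at e1
  rw [aw, bw, psi, psi]
  rw [mul_comm (∏ e ∈ M.1, w e) _] at e1
  rw [mul_comm (∏ e ∈ M'.1, w e) _] at e1
  linear_combination -e1

lemma psi_flip24 (w : Sym2 V → ℂ) {M M' : PM G}
    (h2 : p.e2 ∈ M.1) (h4 : p.e4 ∈ M.1) (hM' : M'.1 = symmDiff M.1 p.edges) :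
    bw w p * psi w M = aw w p * psi w M' := by
  have := psi_flip13 (p := p.rot) w (M := M) (M' := M') h2 h4
    (by rw [Plaquette.rot_edges]; exact hM')
  rwa [aw_rot, bw_rot] at this

end Aux

end RK

open RK in
/-- Uniqueness of the ground state: if all edge weights of `G` are nonzero and the flip
graph on the set of perfect matchings (where `M, M'` are joined iff `M' = φ_p M` for some
`p ∈ Plaqs` with `p₁, p₃ ∈ M` or `p₂, p₄ ∈ M`) is connected, then every `f` with `H f = 0`
is a complex scalar multiple of the weighted RK wavefunction `ψ_w(M) = ∏_{e ∈ M} w e`. -/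
theorem stmt_5 {V : Type*} [Fintype V] [DecidableEq V] (G : SimpleGraph V)
    [Fintype (PM G)] (w : Sym2 V → ℂ) (Plaqs : Finset (Plaquette G))
    (hw : ∀ e ∈ G.edgeSet, w e ≠ 0)
    (Φ : Plaquette G → PM G → PM G)
    (hΦ : ∀ (p : Plaquette G) (M : PM G),
      ((p.e1 ∈ M.1 ∧ p.e3 ∈ M.1) ∨ (p.e2 ∈ M.1 ∧ p.e4 ∈ M.1)) →
      (Φ p M).1 = symmDiff M.1 p.edges)
    (hconn : ∀ M M' : PM G,
      Relation.ReflTransGen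
        (fun A B : PM G => ∃ p ∈ Plaqs,
          ((p.e1 ∈ A.1 ∧ p.e3 ∈ A.1) ∨ (p.e2 ∈ A.1 ∧ p.e4 ∈ A.1)) ∧
          B.1 = symmDiff A.1 p.edges) M M') :
    ∀ f : PM G → ℂ, (∀ M : PM G, Ham w Φ Plaqs f M = 0) →
      ∃ c : ℂ, ∀ M : PM G, f M = c * psi w M := by
  classical
  intro f hf
  rcases isEmpty_or_nonempty (PM G) with h | h
  · exact ⟨0, fun M => (h.false M).elim⟩
  -- The basic algebraic identity behind positive semidefiniteness of each `P_p`.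
  have hid : ∀ a b x y : ℂ,
      (starRingEnd ℂ) x * ((‖a‖ : ℂ) ^ 2 * x - (starRingEnd ℂ) a * b * y)
        + (starRingEnd ℂ) y * ((‖b‖ : ℂ) ^ 2 * y - (starRingEnd ℂ) b * a * x)
        = ((Complex.normSq (a * x - b * y) : ℝ) : ℂ) := by
    have hn : ∀ z : ℂ, ((‖z‖ : ℂ)) ^ 2 = z * (starRingEnd ℂ) z := by
      intro z
      rw [Complex.mul_conj]
      norm_cast
      exact Complex.sq_norm z
    intro a b x y
    rw [hn a, hn b, ← Complex.mul_conj, map_sub, map_mul, map_mul]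
    ring
  -- Key consequence of `H f = 0`: `a_p f(M) = b_p f(φ_p M)` whenever `p₁, p₃ ∈ M`.
  have key : ∀ p ∈ Plaqs, ∀ M : PM G, p.e1 ∈ M.1 → p.e3 ∈ M.1 →
      aw w p * f M = bw w p * f (Φ p M) := by
    have h0 : ∑ M : PM G, (starRingEnd ℂ) (f M) * Ham w Φ Plaqs f M = 0 := by
      simp [hf]
    have h1 : ∑ M : PM G, (starRingEnd ℂ) (f M) * Ham w Φ Plaqs f M
        = ∑ p ∈ Plaqs, ∑ M : PM G, (starRingEnd ℂ) (f M) * Pp w Φ p f M := by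
      simp only [Ham, Finset.mul_sum]
      exact Finset.sum_comm
    have h2 : ∀ p ∈ Plaqs,
        ∑ M : PM G, (starRingEnd ℂ) (f M) * Pp w Φ p f M
        = ((∑ M ∈ Finset.univ.filter (fun M : PM G => p.e1 ∈ M.1 ∧ p.e3 ∈ M.1),
            Complex.normSq (aw w p * f M - bw w p * f (Φ p M)) : ℝ) : ℂ) := by
      intro p _
      set C1 : Finset (PM G) :=
        Finset.univ.filter (fun M : PM G => p.e1 ∈ M.1 ∧ p.e3 ∈ M.1) with hC1
      set C2 : Finset (PM G) :=
        Finset.univ.filter (fun M : PM G => p.e2 ∈ M.1 ∧ p.e4 ∈ M.1) with hC2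
      -- flip facts
      have flip1 : ∀ M ∈ C1, Φ p M ∈ C2 ∧ ¬(p.e1 ∈ (Φ p M).1 ∧ p.e3 ∈ (Φ p M).1) := by
        intro M hM
        rw [hC1, Finset.mem_filter] at hM
        obtain ⟨h1M, h3M⟩ := hM.2
        have hφ : (Φ p M).1 = symmDiff M.1 p.edges := hΦ p M (Or.inl ⟨h1M, h3M⟩)
        obtain ⟨a2, a4, a1, a3⟩ := mem_symmDiff13 (p := p) M.2 h1M h3M
        rw [← hφ] at a1 a2 a3 a4
        exact ⟨Finset.mem_filter.2 ⟨Finset.mem_univ _, a2, a4⟩, fun hc => a1 hc.1⟩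
      have flip2 : ∀ M ∈ C2, Φ p M ∈ C1 := by
        intro M hM
        rw [hC2, Finset.mem_filter] at hM
        obtain ⟨h2M, h4M⟩ := hM.2
        have hφ : (Φ p M).1 = symmDiff M.1 p.edges := hΦ p M (Or.inr ⟨h2M, h4M⟩)
        obtain ⟨a1, a3, a2, a4⟩ := mem_symmDiff24 (p := p) M.2 h2M h4M
        rw [← hφ] at a1 a3
        exact Finset.mem_filter.2 ⟨Finset.mem_univ _, a1, a3⟩
      have inv1 : ∀ M ∈ C1, Φ p (Φ p M) = M := by
        intro M hM
        rw [hC1, Finset.mem_filter] at hM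
        obtain ⟨h1M, h3M⟩ := hM.2
        have hφ : (Φ p M).1 = symmDiff M.1 p.edges := hΦ p M (Or.inl ⟨h1M, h3M⟩)
        have hmem := flip1 M (by rw [hC1, Finset.mem_filter]; exact ⟨Finset.mem_univ _, h1M, h3M⟩)
        rw [hC2, Finset.mem_filter] at hmem
        refine Subtype.ext ?_
        rw [hΦ p (Φ p M) (Or.inr hmem.1.2), hφ, symmDiff_symmDiff_cancel_right]
      have inv2 : ∀ M ∈ C2, Φ p (Φ p M) = M := by
        intro M hM
        rw [hC2, Finset.mem_filter] at hM
        obtain ⟨h2M, h4M⟩ := hM.2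
        have hφ : (Φ p M).1 = symmDiff M.1 p.edges := hΦ p M (Or.inr ⟨h2M, h4M⟩)
        have hmem := flip2 M (by rw [hC2, Finset.mem_filter]; exact ⟨Finset.mem_univ _, h2M, h4M⟩)
        rw [hC1, Finset.mem_filter] at hmem
        refine Subtype.ext ?_
        rw [hΦ p (Φ p M) (Or.inl hmem.2), hφ, symmDiff_symmDiff_cancel_right]
      -- split the sum over all matchings
      have hsplit : ∑ M : PM G, (starRingEnd ℂ) (f M) * Pp w Φ p f M
          = (∑ M ∈ C1, (starRingEnd ℂ) (f M) *
              ((‖aw w p‖ : ℂ) ^ 2 * f M - (starRingEnd ℂ) (aw w p) * bw w p * f (Φ p M)))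
            + ∑ M ∈ C2, (starRingEnd ℂ) (f M) *
              ((‖bw w p‖ : ℂ) ^ 2 * f M - (starRingEnd ℂ) (bw w p) * aw w p * f (Φ p M)) := by
        rw [← Finset.sum_filter_add_sum_filter_not Finset.univ
          (fun M : PM G => p.e1 ∈ M.1 ∧ p.e3 ∈ M.1)]
        congr 1
        · refine Finset.sum_congr rfl fun M hM => ?_
          rw [Finset.mem_filter] at hM
          rw [Pp, if_pos hM.2]
        · have hrw : ∀ M ∈ Finset.univ.filter
              (fun M : PM G => ¬(p.e1 ∈ M.1 ∧ p.e3 ∈ M.1)),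
              (starRingEnd ℂ) (f M) * Pp w Φ p f M
              = if p.e2 ∈ M.1 ∧ p.e4 ∈ M.1 then
                  (starRingEnd ℂ) (f M) *
                    ((‖bw w p‖ : ℂ) ^ 2 * f M - (starRingEnd ℂ) (bw w p) * aw w p * f (Φ p M))
                else 0 := by
            intro M hM
            rw [Finset.mem_filter] at hM
            rw [Pp, if_neg hM.2]
            split_ifs with h'
            · rfl
            · exact mul_zero _
          rw [Finset.sum_congr rfl hrw, ← Finset.sum_filter, Finset.filter_filter]
          refine Finset.sum_congr ?_ fun _ _ => rfl
          rw [hC2]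
          refine Finset.filter_congr fun M _ => ?_
          constructor
          · exact fun hh => hh.2
          · intro hh
            refine ⟨fun hc => ?_, hh⟩
            exact (notMem_of_mem24 (p := p) M.2 hh.1 hh.2).1 hc.1
      -- reindex the second sum by the flip
      have hreindex : ∑ M ∈ C2, (starRingEnd ℂ) (f M) *
            ((‖bw w p‖ : ℂ) ^ 2 * f M - (starRingEnd ℂ) (bw w p) * aw w p * f (Φ p M))
          = ∑ M ∈ C1, (starRingEnd ℂ) (f (Φ p M)) *
            ((‖bw w p‖ : ℂ) ^ 2 * f (Φ p M) - (starRingEnd ℂ) (bw w p) * aw w p * f M) := by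
        refine Finset.sum_nbij' (Φ p) (Φ p) (fun M hM => (flip1 M hM).1) flip2
          inv1 inv2 ?_ |>.symm
        intro M hM
        rw [inv1 M hM]
      rw [hsplit, hreindex, ← Finset.sum_add_distrib]
      rw [Complex.ofReal_sum]
      refine Finset.sum_congr rfl fun M _ => ?_
      exact hid (aw w p) (bw w p) (f M) (f (Φ p M))
    -- each nonnegative term vanishes
    have h3 : ∀ p ∈ Plaqs, ∀ M ∈ Finset.univ.filter
        (fun M : PM G => p.e1 ∈ M.1 ∧ p.e3 ∈ M.1),
        Complex.normSq (aw w p * f M - bw w p * f (Φ p M)) = 0 := by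
      have hsum : (∑ p ∈ Plaqs, ∑ M ∈ Finset.univ.filter
          (fun M : PM G => p.e1 ∈ M.1 ∧ p.e3 ∈ M.1),
          Complex.normSq (aw w p * f M - bw w p * f (Φ p M)) : ℝ) = 0 := by
        have : ((∑ p ∈ Plaqs, ∑ M ∈ Finset.univ.filter
            (fun M : PM G => p.e1 ∈ M.1 ∧ p.e3 ∈ M.1),
            Complex.normSq (aw w p * f M - bw w p * f (Φ p M)) : ℝ) : ℂ) = 0 := by
          rw [Complex.ofReal_sum, ← Finset.sum_congr rfl h2, ← h1, h0]
        exact_mod_cast this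
      have hterm := (Finset.sum_eq_zero_iff_of_nonneg
        (fun p _ => Finset.sum_nonneg fun M _ => Complex.normSq_nonneg _)).1 hsum
      intro p hp
      exact (Finset.sum_eq_zero_iff_of_nonneg
        (fun M _ => Complex.normSq_nonneg _)).1 (hterm p hp)
    intro p hp M h1M h3M
    have := h3 p hp M (Finset.mem_filter.2 ⟨Finset.mem_univ _, h1M, h3M⟩)
    rw [Complex.normSq_eq_zero] at this
    exact sub_eq_zero.1 this
  -- the symmetric version
  have key2 : ∀ p ∈ Plaqs, ∀ M : PM G, p.e2 ∈ M.1 → p.e4 ∈ M.1 →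
      bw w p * f M = aw w p * f (Φ p M) := by
    intro p hp M h2M h4M
    have hφ : (Φ p M).1 = symmDiff M.1 p.edges := hΦ p M (Or.inr ⟨h2M, h4M⟩)
    obtain ⟨a1, a3, a2, a4⟩ := mem_symmDiff24 (p := p) M.2 h2M h4M
    rw [← hφ] at a1 a3
    have hinv : Φ p (Φ p M) = M := by
      refine Subtype.ext ?_
      rw [hΦ p (Φ p M) (Or.inl ⟨a1, a3⟩), hφ, symmDiff_symmDiff_cancel_right]
    have := key p hp (Φ p M) a1 a3
    rw [hinv] at this
    exact this.symm
  -- single flip step preserves the ratio `f / ψ`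
  have hstep : ∀ A B : PM G,
      (∃ p ∈ Plaqs, ((p.e1 ∈ A.1 ∧ p.e3 ∈ A.1) ∨ (p.e2 ∈ A.1 ∧ p.e4 ∈ A.1)) ∧
        B.1 = symmDiff A.1 p.edges) → f A * psi w B = f B * psi w A := by
    rintro A B ⟨p, hp, hcond, hB⟩
    have hBeq : B = Φ p A := Subtype.ext (by rw [hΦ p A hcond, hB])
    rcases hcond with ⟨h1A, h3A⟩ | ⟨h2A, h4A⟩
    · have hf1 := key p hp A h1A h3A
      rw [← hBeq] at hf1
      have hps := psi_flip13 (p := p) w h1A h3A hB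
      apply mul_left_cancel₀ (aw_ne_zero hw p)
      linear_combination psi w B * hf1 - f B * hps
    · have hf1 := key2 p hp A h2A h4A
      rw [← hBeq] at hf1
      have hps := psi_flip24 (p := p) w h2A h4A hB
      apply mul_left_cancel₀ (bw_ne_zero hw p)
      linear_combination psi w B * hf1 - f B * hps
  -- propagate along the connected flip graph
  obtain ⟨M₀⟩ := h
  refine ⟨f M₀ / psi w M₀, fun M => ?_⟩
  have hM : f M₀ * psi w M = f M * psi w M₀ := by
    induction hconn M₀ M with
    | refl => rfl
    | @tail b c hab hbc ih =>
      apply mul_left_cancel₀ (psi_ne_zero hw b)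
      linear_combination psi w c * ih + psi w M₀ * hstep b c hbc
  rw [div_mul_eq_mul_div, eq_div_iff (psi_ne_zero hw M₀)]
  linear_combination hM.symm
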